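/- arXiv:1810.10365 — 6 statements merged into one kernel-verified Lean document; each statement's English description precedes it below -/
import Mathlib

section
/- Let ξ₀ > 0, let y₀ := −1/√(1 + 16·ξ₀⁴), and for y ∈ (y₀, 1) define ρ(y) := ξ₀·(1 + 4·ξ₀²·y·(1−y²)^(−1/2))^(−1/2), U(y) := (1+y)^(−1/2)·ρ(y), and V(y) := −i·(1−y)^(−1/2)·ρ(y). Then (1−y)^(−1/4)·|U(y)| → 2^(−5/4) and (1−y)^(1/4)·|V(y)| → 2^(−3/4) as y → 1 from the left; in particular U(y) → 0 while V(y) is unbounded as y → 1, with the self-similar scaling rates |U(y)| ∼ (1−y)^(1/4) and |V(y)| ∼ (1−y)^(−1/4). -/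
open Set Complex Filter Topology

/-- asymptotics of the explicit self-similar profile as `y → 1⁻`:
`(1-y)^{-1/4} |U(y)| → 2^{-5/4}` and `(1-y)^{1/4} |V(y)| → 2^{-3/4}`;
in particular `U(y) → 0` while `|V(y)| → +∞`, realizing the self-similar rates
`|U| ∼ (1-y)^{1/4}` and `|V| ∼ (1-y)^{-1/4}`. -/
theorem explicit_solution_asymptotics_at_one (ξ₀ : ℝ) (hξ₀ : 0 < ξ₀) (y₀ : ℝ)
    (hy₀ : y₀ = -1 / Real.sqrt (1 + 16 * ξ₀ ^ 4))
    (ρ : ℝ → ℝ)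
    (hρ : ∀ y, ρ y = ξ₀ * (1 + 4 * ξ₀ ^ 2 * y * (1 - y ^ 2) ^ (-(1 / 2) : ℝ)) ^ (-(1 / 2) : ℝ))
    (U V : ℝ → ℂ)
    (hU : ∀ y, U y = (((1 + y) ^ (-(1 / 2) : ℝ) * ρ y : ℝ) : ℂ))
    (hV : ∀ y, V y = -Complex.I * (((1 - y) ^ (-(1 / 2) : ℝ) * ρ y : ℝ) : ℂ)) :
    Tendsto (fun y : ℝ => (1 - y) ^ (-(1 / 4) : ℝ) * ‖U y‖)
      (nhdsWithin 1 (Iio 1)) (nhds ((2 : ℝ) ^ (-(5 / 4) : ℝ))) ∧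
    Tendsto (fun y : ℝ => (1 - y) ^ ((1 / 4) : ℝ) * ‖V y‖)
      (nhdsWithin 1 (Iio 1)) (nhds ((2 : ℝ) ^ (-(3 / 4) : ℝ))) ∧
    Tendsto U (nhdsWithin 1 (Iio 1)) (nhds 0) ∧
    Tendsto (fun y : ℝ => ‖V y‖) (nhdsWithin 1 (Iio 1)) atTop := by
  have h2 : (0:ℝ) < 2 := two_pos
  have hIoo : Ioo (0:ℝ) 1 ∈ nhdsWithin (1:ℝ) (Iio 1) :=
    Ioo_mem_nhdsLT_of_mem ⟨one_pos, le_refl 1⟩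
  have hsub : Tendsto (fun y : ℝ => 1 - y) (nhdsWithin 1 (Iio 1)) (nhds (0:ℝ)) := by
    have h : Tendsto (fun y : ℝ => 1 - y) (nhds (1:ℝ)) (nhds (1-1:ℝ)) :=
      tendsto_const_nhds.sub tendsto_id
    simpa using h.mono_left nhdsWithin_le_nhds
  -- limit of the auxiliary closed-form expression
  have haux : Tendsto (fun y : ℝ => ξ₀ * ((1-y) ^ ((1/2):ℝ) + 4*ξ₀^2*y*(1+y) ^ (-(1/2):ℝ)) ^ (-(1/2):ℝ))
      (nhdsWithin 1 (Iio 1)) (nhds ((2:ℝ) ^ (-(3/4):ℝ))) := by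
    have hc : ξ₀ * ((0:ℝ) + 4*ξ₀^2*(2:ℝ) ^ (-(1/2):ℝ)) ^ (-(1/2):ℝ) = (2:ℝ) ^ (-(3/4):ℝ) := by
      have ha : (0:ℝ) < 2*ξ₀ := by linarith
      have h1 : (0:ℝ) + 4*ξ₀^2*(2:ℝ) ^ (-(1/2):ℝ) = (2*ξ₀)^(2:ℕ) * (2:ℝ) ^ (-(1/2):ℝ) := by ring
      rw [h1, Real.mul_rpow (by positivity) (by positivity), ← Real.rpow_natCast (2*ξ₀) 2,
        ← Real.rpow_mul ha.le, ← Real.rpow_mul h2.le]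
      norm_num
      rw [Real.rpow_neg_one]
      rw [show ξ₀ * ((2*ξ₀)⁻¹ * (2:ℝ)^((1/4):ℝ)) = (2:ℝ)⁻¹ * (2:ℝ)^((1/4):ℝ) by
        field_simp]
      rw [← Real.rpow_neg_one (2:ℝ), ← Real.rpow_add h2]
      norm_num
    rw [← hc]
    apply Tendsto.const_mul
    apply Filter.Tendsto.rpow_const
    · apply Filter.Tendsto.add
      · have := hsub.rpow_const (p := (1/2:ℝ)) (Or.inr (by norm_num))
        simpa [Real.zero_rpow] using this
      · have hb : Tendsto (fun y : ℝ => 1 + y) (nhds (1:ℝ)) (nhds (2:ℝ)) := by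
          have h : Tendsto (fun y : ℝ => 1 + y) (nhds (1:ℝ)) (nhds (1+1:ℝ)) :=
            tendsto_const_nhds.add tendsto_id
          simpa [one_add_one_eq_two] using h
        have hid : Tendsto (fun y : ℝ => 4*ξ₀^2*y) (nhds (1:ℝ)) (nhds (4*ξ₀^2:ℝ)) := by
          have h : Tendsto (fun y : ℝ => 4*ξ₀^2*y) (nhds (1:ℝ)) (nhds (4*ξ₀^2*1:ℝ)) :=
            tendsto_const_nhds.mul tendsto_id
          simpa using h
        exact (hid.mul (hb.rpow_const (Or.inl (by norm_num)))).mono_left nhdsWithin_le_nhds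
    · left; positivity
  -- key limit : (1-y)^(-1/4) * ρ y → 2^(-3/4)
  have hkey : Tendsto (fun y : ℝ => (1-y) ^ (-(1/4):ℝ) * ρ y)
      (nhdsWithin 1 (Iio 1)) (nhds ((2:ℝ) ^ (-(3/4):ℝ))) := by
    refine haux.congr' ?_
    filter_upwards [hIoo] with y hy
    have hy0 : (0:ℝ) < y := hy.1
    have ha : (0:ℝ) < 1 - y := by linarith [hy.2]
    have hb : (0:ℝ) < 1 + y := by linarith
    have h1y2 : (1 - y^2 : ℝ) = (1-y)*(1+y) := by ring
    have hA : (0:ℝ) < 1 + 4*ξ₀^2*y*(1 - y^2) ^ (-(1/2):ℝ) := by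
      have : (0:ℝ) < (1 - y^2) ^ (-(1/2):ℝ) := by
        apply Real.rpow_pos_of_pos; nlinarith
      positivity
    have e1 : ((1 - y^2 : ℝ)) ^ (-(1/2):ℝ) = (1-y) ^ (-(1/2):ℝ) * (1+y) ^ (-(1/2):ℝ) := by
      rw [h1y2, Real.mul_rpow ha.le hb.le]
    have e12 : (1-y) ^ ((1/2):ℝ) * (1-y) ^ (-(1/2):ℝ) = 1 := by
      rw [← Real.rpow_add ha]; norm_num
    have e2 : (1-y) ^ ((1/2):ℝ) * (1 + 4*ξ₀^2*y*(1 - y^2) ^ (-(1/2):ℝ))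
        = (1-y) ^ ((1/2):ℝ) + 4*ξ₀^2*y*(1+y) ^ (-(1/2):ℝ) := by
      rw [e1]
      linear_combination (4*ξ₀^2*y*(1+y) ^ (-(1/2):ℝ)) * e12
    have e3 : ((1-y) ^ ((1/2):ℝ)) ^ (-(1/2):ℝ) = (1-y) ^ (-(1/4):ℝ) := by
      rw [← Real.rpow_mul ha.le]; norm_num
    rw [hρ y, ← e2, Real.mul_rpow (Real.rpow_nonneg ha.le _) hA.le, e3]
    ring
  -- individual limits
  have hb2 : Tendsto (fun y : ℝ => (1+y) ^ (-(1/2):ℝ)) (nhdsWithin 1 (Iio 1))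
      (nhds ((2:ℝ) ^ (-(1/2):ℝ))) := by
    have hb : Tendsto (fun y : ℝ => 1 + y) (nhds (1:ℝ)) (nhds (2:ℝ)) := by
      have h : Tendsto (fun y : ℝ => 1 + y) (nhds (1:ℝ)) (nhds (1+1:ℝ)) :=
        tendsto_const_nhds.add tendsto_id
      simpa [one_add_one_eq_two] using h
    exact (hb.rpow_const (Or.inl (by norm_num))).mono_left nhdsWithin_le_nhds
  have T1 : Tendsto (fun y : ℝ => (1 - y) ^ (-(1 / 4) : ℝ) * ‖U y‖)
      (nhdsWithin 1 (Iio 1)) (nhds ((2 : ℝ) ^ (-(5 / 4) : ℝ))) := by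
    have hlim := hb2.mul hkey
    have hval : (2:ℝ) ^ (-(1/2):ℝ) * (2:ℝ) ^ (-(3/4):ℝ) = (2:ℝ) ^ (-(5/4):ℝ) := by
      rw [← Real.rpow_add h2]; norm_num
    rw [hval] at hlim
    refine hlim.congr' ?_
    filter_upwards [hIoo] with y hy
    have ha : (0:ℝ) < 1 - y := by linarith [hy.2]
    have hb : (0:ℝ) < 1 + y := by linarith [hy.1]
    have hρnn : 0 ≤ (1+y) ^ (-(1/2):ℝ) * ρ y := by
      rw [hρ y]
      have hA : (0:ℝ) < 1 + 4*ξ₀^2*y*(1 - y^2) ^ (-(1/2):ℝ) := by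
        have : (0:ℝ) < (1 - y^2) ^ (-(1/2):ℝ) := by
          apply Real.rpow_pos_of_pos; nlinarith [hy.1, hy.2]
        have := hy.1; positivity
      positivity
    rw [hU y, Complex.norm_real, Real.norm_of_nonneg hρnn]
    ring
  have hVabs : ∀ y ∈ Ioo (0:ℝ) 1, ‖V y‖ = (1-y) ^ (-(1/2):ℝ) * ρ y := by
    intro y hy
    have ha : (0:ℝ) < 1 - y := by linarith [hy.2]
    have hρnn : 0 ≤ (1-y) ^ (-(1/2):ℝ) * ρ y := by
      rw [hρ y]
      have hA : (0:ℝ) < 1 + 4*ξ₀^2*y*(1 - y^2) ^ (-(1/2):ℝ) := by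
        have : (0:ℝ) < (1 - y^2) ^ (-(1/2):ℝ) := by
          apply Real.rpow_pos_of_pos; nlinarith [hy.1, hy.2]
        have := hy.1; positivity
      positivity
    rw [hV y]
    rw [norm_mul, Complex.norm_real, Real.norm_of_nonneg hρnn]
    simp
  have T2 : Tendsto (fun y : ℝ => (1 - y) ^ ((1 / 4) : ℝ) * ‖V y‖)
      (nhdsWithin 1 (Iio 1)) (nhds ((2 : ℝ) ^ (-(3 / 4) : ℝ))) := by
    refine hkey.congr' ?_
    filter_upwards [hIoo] with y hy
    have ha : (0:ℝ) < 1 - y := by linarith [hy.2]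
    rw [hVabs y hy, ← mul_assoc, ← Real.rpow_add ha]
    norm_num
  have T3 : Tendsto U (nhdsWithin 1 (Iio 1)) (nhds 0) := by
    rw [tendsto_zero_iff_norm_tendsto_zero]
    have hq : Tendsto (fun y : ℝ => (1-y) ^ ((1/4):ℝ)) (nhdsWithin 1 (Iio 1)) (nhds (0:ℝ)) := by
      have := hsub.rpow_const (p := (1/4:ℝ)) (Or.inr (by norm_num))
      simpa [Real.zero_rpow] using this
    have hlim := hq.mul T1
    rw [zero_mul] at hlim
    refine hlim.congr' ?_
    filter_upwards [hIoo] with y hy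
    have ha : (0:ℝ) < 1 - y := by linarith [hy.2]
    have : (1-y) ^ ((1/4):ℝ) * ((1-y) ^ (-(1/4):ℝ) * ‖U y‖)
        = ((1-y) ^ ((1/4):ℝ) * (1-y) ^ (-(1/4):ℝ)) * ‖U y‖ := by ring
    rw [this, ← Real.rpow_add ha]
    norm_num
  have T4 : Tendsto (fun y : ℝ => ‖V y‖) (nhdsWithin 1 (Iio 1)) atTop := by
    have hinv : Tendsto (fun y : ℝ => (1-y) ^ (-(1/4):ℝ)) (nhdsWithin 1 (Iio 1)) atTop := by
      have hq : Tendsto (fun y : ℝ => (1-y) ^ ((1/4):ℝ)) (nhdsWithin 1 (Iio 1))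
          (nhdsWithin 0 (Ioi 0)) := by
        rw [tendsto_nhdsWithin_iff]
        constructor
        · have := hsub.rpow_const (p := (1/4:ℝ)) (Or.inr (by norm_num))
          simpa [Real.zero_rpow] using this
        · filter_upwards [self_mem_nhdsWithin] with y hy
          have ha : (0:ℝ) < 1 - y := by simp at hy; linarith
          exact Real.rpow_pos_of_pos ha _
      have := tendsto_inv_nhdsGT_zero.comp hq
      refine this.congr' ?_
      filter_upwards [self_mem_nhdsWithin] with y hy
      have ha : (0:ℝ) < 1 - y := by simp at hy; linarith
      simp only [Function.comp]
      rw [← Real.rpow_neg ha.le]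
    have := hinv.atTop_mul_pos (Real.rpow_pos_of_pos h2 (-(3/4):ℝ)) T2
    refine this.congr' ?_
    filter_upwards [hIoo] with y hy
    have ha : (0:ℝ) < 1 - y := by linarith [hy.2]
    have : (1-y) ^ (-(1/4):ℝ) * ((1-y) ^ ((1/4):ℝ) * ‖V y‖)
        = ((1-y) ^ (-(1/4):ℝ) * (1-y) ^ ((1/4):ℝ)) * ‖V y‖ := by ring
    rw [this, ← Real.rpow_add ha]
    norm_num
  exact ⟨T1, T2, T3, T4⟩
end

section
/- Let ξ₀ > 0, let y₀ := −1/√(1 + 16·ξ₀⁴) ∈ (−1, 0), and for y ∈ (y₀, 1) define ρ(y) := ξ₀·(1 + 4·ξ₀²·y·(1−y²)^(−1/2))^(−1/2), U(y) := (1+y)^(−1/2)·ρ(y), and V(y) := −i·(1−y)^(−1/2)·ρ(y). Then |U(y)| → +∞ and |V(y)| → +∞ as y → y₀ from the right; in particular, this solution of the self-similar system (S) with k = ℓ = 1 does not extend to a bounded solution on any interval (a, 1) with a < y₀. -/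
open Set Complex Filter Topology

/-- `R(y) = U(y) conj(V(y)) + conj(U(y)) V(y)` (a real number, viewed in `ℂ`). -/
noncomputable def Rfun (U V : ℝ → ℂ) (y : ℝ) : ℂ :=
  U y * (starRingEnd ℂ) (V y) + (starRingEnd ℂ) (U y) * V y

/-- `F(y) = ℓ (|U|² + |V|²)^k R^{ℓ-1}` (equal to `0` when `ℓ = 0`). -/
noncomputable def Ffun (k l : ℕ) (U V : ℝ → ℂ) (y : ℝ) : ℂ :=
  (l : ℂ) * ((‖U y‖ ^ 2 + ‖V y‖ ^ 2 : ℝ) : ℂ) ^ k *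
    (Rfun U V y) ^ (l - 1)

/-- `G(y) = k (|U|² + |V|²)^{k-1} R^ℓ` (equal to `0` when `k = 0`). -/
noncomputable def Gfun (k l : ℕ) (U V : ℝ → ℂ) (y : ℝ) : ℂ :=
  (k : ℂ) * ((‖U y‖ ^ 2 + ‖V y‖ ^ 2 : ℝ) : ℂ) ^ (k - 1) *
    (Rfun U V y) ^ l

/-- `(U, V)` solves the self-similar system (S) on the open set `J`:
`U, V` are continuously differentiable on `J` and for all `y ∈ J`,
`i[(y+1)U' + U/(2p)] = F V + G U` and `i[(y-1)V' + V/(2p)] = F U + G V`,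
where `p = k + ℓ - 1`. -/
def SolvesS (k l : ℕ) (U V : ℝ → ℂ) (J : Set ℝ) : Prop :=
  ContDiffOn ℝ 1 U J ∧ ContDiffOn ℝ 1 V J ∧
  ∀ y ∈ J,
    Complex.I * ((↑y + 1) * deriv U y + (1 / (2 * ((k + l - 1 : ℕ) : ℂ))) * U y)
      = Ffun k l U V y * V y + Gfun k l U V y * U y ∧
    Complex.I * ((↑y - 1) * deriv V y + (1 / (2 * ((k + l - 1 : ℕ) : ℂ))) * V y)
      = Ffun k l U V y * U y + Gfun k l U V y * V y

/-- the explicit self-similar profile blows up at `y₀`: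
`|U(y)| → +∞` and `|V(y)| → +∞` as `y → y₀⁺`; in particular it does not extend
to a bounded solution of (S) on any interval `(a, 1)` with `a < y₀`. -/
theorem explicit_solution_blowup_at_y0 (ξ₀ : ℝ) (hξ₀ : 0 < ξ₀) (y₀ : ℝ)
    (hy₀ : y₀ = -1 / Real.sqrt (1 + 16 * ξ₀ ^ 4))
    (ρ : ℝ → ℝ)
    (hρ : ∀ y, ρ y = ξ₀ * (1 + 4 * ξ₀ ^ 2 * y * (1 - y ^ 2) ^ (-(1 / 2) : ℝ)) ^ (-(1 / 2) : ℝ))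
    (U V : ℝ → ℂ)
    (hU : ∀ y, U y = (((1 + y) ^ (-(1 / 2) : ℝ) * ρ y : ℝ) : ℂ))
    (hV : ∀ y, V y = -Complex.I * (((1 - y) ^ (-(1 / 2) : ℝ) * ρ y : ℝ) : ℂ)) :
    y₀ ∈ Ioo (-1 : ℝ) 0 ∧
    Tendsto (fun y : ℝ => ‖U y‖) (nhdsWithin y₀ (Ioi y₀)) atTop ∧
    Tendsto (fun y : ℝ => ‖V y‖) (nhdsWithin y₀ (Ioi y₀)) atTop ∧
    ∀ a : ℝ, -1 ≤ a → a < y₀ → ∀ W Z : ℝ → ℂ,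
      SolvesS 1 1 W Z (Ioo a 1) →
      (∀ y ∈ Ioo y₀ 1, W y = U y ∧ Z y = V y) →
      ¬ ∃ M : ℝ, ∀ y ∈ Ioo a 1, ‖W y‖ ≤ M ∧ ‖Z y‖ ≤ M := by
  have hs0 : (0:ℝ) < 1 + 16 * ξ₀ ^ 4 := by positivity
  set s := Real.sqrt (1 + 16 * ξ₀ ^ 4) with hsdef
  have hs1 : 1 < s := by
    rw [hsdef]
    exact (Real.lt_sqrt zero_le_one).mpr (by nlinarith [pow_pos hξ₀ 4])
  have hspos : (0:ℝ) < s := lt_trans one_pos hs1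
  have hssq : s ^ 2 = 1 + 16 * ξ₀ ^ 4 := Real.sq_sqrt hs0.le
  have hy0mem : y₀ ∈ Ioo (-1:ℝ) 0 := by
    rw [hy₀]
    constructor
    · rw [neg_div, neg_lt_neg_iff, div_lt_one hspos]; exact hs1
    · rw [neg_div, neg_lt_zero]; positivity
  have hy0neg : y₀ < 0 := hy0mem.2
  have hy0gt : (-1:ℝ) < y₀ := hy0mem.1
  -- the inner function
  set h : ℝ → ℝ := fun y => 1 + 4 * ξ₀ ^ 2 * y * (1 - y ^ 2) ^ (-(1 / 2) : ℝ) with hhdef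
  have hrpow_inv : ∀ x : ℝ, 0 < x → x ^ (-(1 / 2) : ℝ) = (Real.sqrt x)⁻¹ := by
    intro x hx
    rw [Real.rpow_neg hx.le, Real.sqrt_eq_rpow]
  -- h is positive on (y₀, 0)
  have hy0sq : y₀ ^ 2 = 1 / s ^ 2 := by rw [hy₀]; field_simp
  have hpos : ∀ y ∈ Ioo y₀ (0:ℝ), 0 < h y := by
    intro y hy
    have hy2 : y ^ 2 < y₀ ^ 2 := by nlinarith [hy.1, hy.2, hy0neg]
    have hy2' : y ^ 2 * s ^ 2 < 1 := by
      rw [hy0sq] at hy2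
      calc y ^ 2 * s ^ 2 < (1 / s ^ 2) * s ^ 2 := by
            exact mul_lt_mul_of_pos_right hy2 (by positivity)
        _ = 1 := by field_simp
    have ht : (0:ℝ) < 1 - y ^ 2 := by nlinarith
    have hsq : 4 * ξ₀ ^ 2 * (-y) < Real.sqrt (1 - y ^ 2) := by
      rw [Real.lt_sqrt (by nlinarith [hy.2, sq_nonneg ξ₀])]
      nlinarith [hssq]
    have hsqpos : 0 < Real.sqrt (1 - y ^ 2) := Real.sqrt_pos.mpr ht
    have key : 4 * ξ₀ ^ 2 * (-y) * (Real.sqrt (1 - y ^ 2))⁻¹ < 1 := by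
      have h2 := mul_lt_mul_of_pos_right hsq (inv_pos.mpr hsqpos)
      rwa [mul_inv_cancel₀ hsqpos.ne'] at h2
    simp only [hhdef]
    rw [hrpow_inv _ ht]
    nlinarith [key]
  -- h y₀ = 0
  have ht0 : 1 - y₀ ^ 2 = (4 * ξ₀ ^ 2 / s) ^ 2 := by
    rw [hy0sq]; field_simp; nlinarith [hssq]
  have hsqrt0 : Real.sqrt (1 - y₀ ^ 2) = 4 * ξ₀ ^ 2 / s := by
    rw [ht0, Real.sqrt_sq (by positivity)]
  have hhy0 : h y₀ = 0 := by
    have ht : (0:ℝ) < 1 - y₀ ^ 2 := by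
      rw [ht0]; positivity
    simp only [hhdef]
    rw [hrpow_inv _ ht, hsqrt0, hy₀]
    field_simp
    ring
  -- h tends to 0 within (y₀, ∞), staying positive
  have hIoo : Ioo y₀ (0:ℝ) ∈ 𝓝[>] y₀ := Ioo_mem_nhdsGT_of_mem ⟨le_refl _, hy0neg⟩
  have hcont : ContinuousAt h y₀ := by
    have ht : (1:ℝ) - y₀ ^ 2 ≠ 0 := by
      rw [ht0]; positivity
    exact continuousAt_const.add ((continuousAt_const.mul continuousAt_id).mul
      (((continuousAt_const.sub (continuousAt_id.pow 2)).rpow_const (Or.inl ht))))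
  have htends : Tendsto h (𝓝[>] y₀) (𝓝[>] (0:ℝ)) := by
    rw [tendsto_nhdsWithin_iff]
    constructor
    · rw [← hhy0]
      exact (hcont.tendsto).mono_left nhdsWithin_le_nhds
    · filter_upwards [hIoo] with y hy using hpos y hy
  -- ρ tends to atTop
  have hsqrt_tends : Tendsto (fun y => Real.sqrt (h y)) (𝓝[>] y₀) (𝓝[>] (0:ℝ)) := by
    rw [tendsto_nhdsWithin_iff]
    constructor
    · have : Tendsto Real.sqrt (𝓝 0) (𝓝 0) := by
        have h2 := Real.continuous_sqrt.tendsto 0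
        rwa [Real.sqrt_zero] at h2
      exact this.comp (htends.mono_right nhdsWithin_le_nhds)
    · filter_upwards [hIoo] with y hy using Real.sqrt_pos.mpr (hpos y hy)
  have hρtends : Tendsto ρ (𝓝[>] y₀) atTop := by
    have h1 : Tendsto (fun y => ξ₀ * (Real.sqrt (h y))⁻¹) (𝓝[>] y₀) atTop :=
      (tendsto_inv_nhdsGT_zero.comp hsqrt_tends).const_mul_atTop hξ₀
    refine h1.congr' ?_
    filter_upwards [hIoo] with y hy
    rw [hρ y, ← hrpow_inv _ (hpos y hy)]
  -- bounds: ρ y / 2 ≤ |U y| and ρ y / 2 ≤ |V y| on Ioo y₀ 0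
  have hfac : ∀ x : ℝ, 0 < x → x ≤ 2 → (1/2 : ℝ) ≤ x ^ (-(1 / 2) : ℝ) := by
    intro x hx hx2
    rw [hrpow_inv _ hx]
    have h1 : Real.sqrt x ≤ 2 := by
      rw [show (2:ℝ) = Real.sqrt 4 by rw [show (4:ℝ) = 2^2 by norm_num, Real.sqrt_sq]; norm_num]
      exact Real.sqrt_le_sqrt (by linarith)
    have h0 : 0 < Real.sqrt x := Real.sqrt_pos.mpr hx
    rw [inv_eq_one_div]
    exact one_div_le_one_div_of_le h0 h1
  have hρpos : ∀ y ∈ Ioo y₀ (0:ℝ), 0 < ρ y := by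
    intro y hy
    rw [hρ y]
    have := hpos y hy
    simp only [hhdef] at this
    positivity
  have hUbound : ∀ y ∈ Ioo y₀ (0:ℝ), ρ y / 2 ≤ ‖U y‖ := by
    intro y hy
    rw [hU y, Complex.norm_real, Real.norm_eq_abs]
    have h1 : 0 < 1 + y := by linarith [hy.1, hy0gt]
    have h2 : (1:ℝ) + y ≤ 2 := by linarith [hy.2]
    have := hfac (1 + y) h1 h2
    have hρy := hρpos y hy
    have : ρ y / 2 ≤ (1 + y) ^ (-(1 / 2) : ℝ) * ρ y := by nlinarith
    exact this.trans (le_abs_self _)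
  have hVbound : ∀ y ∈ Ioo y₀ (0:ℝ), ρ y / 2 ≤ ‖V y‖ := by
    intro y hy
    rw [hV y]
    rw [norm_mul]
    simp only [norm_neg, Complex.norm_I, one_mul, Complex.norm_real, Real.norm_eq_abs]
    have h1 : 0 < 1 - y := by linarith [hy.2]
    have h2 : (1:ℝ) - y ≤ 2 := by linarith [hy.1, hy0gt]
    have := hfac (1 - y) h1 h2
    have hρy := hρpos y hy
    have : ρ y / 2 ≤ (1 - y) ^ (-(1 / 2) : ℝ) * ρ y := by nlinarith
    exact this.trans (le_abs_self _)
  have hhalf : Tendsto (fun y => ρ y / 2) (𝓝[>] y₀) atTop :=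
    hρtends.atTop_div_const two_pos
  have hUtends : Tendsto (fun y : ℝ => ‖U y‖) (𝓝[>] y₀) atTop := by
    refine tendsto_atTop_mono' _ ?_ hhalf
    filter_upwards [hIoo] with y hy using hUbound y hy
  have hVtends : Tendsto (fun y : ℝ => ‖V y‖) (𝓝[>] y₀) atTop := by
    refine tendsto_atTop_mono' _ ?_ hhalf
    filter_upwards [hIoo] with y hy using hVbound y hy
  refine ⟨hy0mem, hUtends, hVtends, ?_⟩
  intro a ha haly W Z hS hWZ ⟨M, hM⟩
  have hIoo1 : Ioo y₀ (1:ℝ) ∈ 𝓝[>] y₀ :=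
    Ioo_mem_nhdsGT_of_mem ⟨le_refl _, by linarith⟩
  have hev : ∀ᶠ y in 𝓝[>] y₀, M < ‖U y‖ := hUtends.eventually_gt_atTop M
  have hIoo1' : ∀ᶠ y in 𝓝[>] y₀, y ∈ Ioo y₀ (1:ℝ) := eventually_of_mem hIoo1 (fun y hy => hy)
  obtain ⟨y, hy1, hy2⟩ := (hev.and hIoo1').exists
  have hy3 : y ∈ Ioo a 1 := ⟨lt_trans haly hy2.1, hy2.2⟩
  have := (hM y hy3).1
  rw [(hWZ y hy2).1] at this
  linarith
end

section
/- Let k = ℓ = 1. Suppose (U, V) solves the self-similar system (S) on an open interval J ⊆ (−1,1) with 0 ∈ J, and suppose |U(0)| = |V(0)| > 0 and |Im(conj(U(0))·V(0))| < |U(0)|·|V(0)|. Then sup J < 1 and inf J > −1; that is, there is no such solution defined on an interval whose supremum is 1 or whose infimum is −1. (Every solution with |U(0)| = |V(0)| not lying on the invariant phase lines extends neither to y → 1 nor to y → −1.) -/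
open Set Complex Filter Topology

set_option maxHeartbeats 1000000


private lemma monoOn_aux {F F' : ℝ → ℝ} {c d : ℝ}
    (hF : ∀ y ∈ Set.Ico c d, HasDerivAt F (F' y) y)
    (h0 : ∀ y ∈ Set.Ioo c d, 0 ≤ F' y) : MonotoneOn F (Set.Ico c d) := by
  apply monotoneOn_of_hasDerivWithinAt_nonneg (f' := F') (convex_Ico c d)
    (fun y hy => (hF y hy).continuousAt.continuousWithinAt)
  · intro y hy
    rw [interior_Ico] at hy
    exact (hF y (Ioo_subset_Ico_self hy)).hasDerivWithinAt
  · intro y hy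
    rw [interior_Ico] at hy
    exact h0 y hy

private lemma antiOn_aux {F F' : ℝ → ℝ} {c d : ℝ}
    (hF : ∀ y ∈ Set.Ico c d, HasDerivAt F (F' y) y)
    (h0 : ∀ y ∈ Set.Ioo c d, F' y ≤ 0) : AntitoneOn F (Set.Ico c d) := by
  apply antitoneOn_of_hasDerivWithinAt_nonpos (f' := F') (convex_Ico c d)
    (fun y hy => (hF y hy).continuousAt.continuousWithinAt)
  · intro y hy
    rw [interior_Ico] at hy
    exact (hF y (Ioo_subset_Ico_self hy)).hasDerivWithinAt
  · intro y hy
    rw [interior_Ico] at hy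
    exact h0 y hy

private lemma constOn_aux {F F' : ℝ → ℝ} {c d : ℝ}
    (hF : ∀ y ∈ Set.Ioo c d, HasDerivAt F (F' y) y)
    (h0 : ∀ y ∈ Set.Ioo c d, F' y = 0) {x y : ℝ} (hx : x ∈ Set.Ioo c d)
    (hy : y ∈ Set.Ioo c d) : F x = F y := by
  have hF0 : ∀ z ∈ Set.Ioo c d, HasDerivAt F 0 z := by
    intro z hz; have := hF z hz; rwa [h0 z hz] at this
  apply Convex.is_const_of_fderivWithin_eq_zero (𝕜 := ℝ) (convex_Ioo c d)
    (fun z hz => ((hF0 z hz).differentiableAt).differentiableWithinAt) _ hx hy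
  intro z hz
  rw [fderivWithin_of_isOpen isOpen_Ioo hz, (hF0 z hz).hasFDerivAt.fderiv]
  ext
  simp

private lemma pos_on_aux {F : ℝ → ℝ} {c d : ℝ} (hc : c < 0) (hd : 0 < d)
    (hcont : ContinuousOn F (Set.Ioo c d)) (h0 : 0 < F 0)
    (hne : ∀ y ∈ Set.Ioo c d, F y ≠ 0) : ∀ y ∈ Set.Ioo c d, 0 < F y := by
  intro y hy
  rcases (hne y hy).lt_or_gt with hneg | hpos
  · exfalso
    have h0mem : (0:ℝ) ∈ Set.Ioo c d := ⟨hc, hd⟩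
    have hsub : Set.uIcc y 0 ⊆ Set.Ioo c d :=
      (Set.ordConnected_Ioo).uIcc_subset hy h0mem
    have := intermediate_value_uIcc (hcont.mono hsub)
    have h0m : (0:ℝ) ∈ Set.uIcc (F y) (F 0) := by
      rw [Set.mem_uIcc]; left; exact ⟨le_of_lt hneg, le_of_lt h0⟩
    obtain ⟨z, hz, hz0⟩ := this h0m
    exact hne z (hsub hz) hz0
  · exact hpos

private lemma core_blowup (m ρ θ : ℝ → ℝ) (a b : ℝ)
    (ha : -1 ≤ a) (hb : b ≤ 1) (ha0 : a < 0) (hb0 : 0 < b)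
    (hm : ∀ y ∈ Set.Ioo a b, HasDerivAt m (4 * m y * θ y / (1 - y^2)) y)
    (hθ : ∀ y ∈ Set.Ioo a b,
      HasDerivAt θ ((4*(m y)^2/(1-y^2) + 4*(ρ y)^2 + y*θ y)/(1-y^2)) y)
    (hρ : ∀ y ∈ Set.Ioo a b, HasDerivAt ρ ((y*ρ y - 4*θ y*ρ y)/(1-y^2)) y)
    (hfg : ∀ y ∈ Set.Ioo a b, (ρ y)^2 + (θ y)^2 = (m y)^2/(1-y^2))
    (hm0 : 0 < m 0) (hρ0 : 0 < ρ 0) : b < 1 := by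
  by_contra hblt
  have hb1 : b = 1 := le_antisymm hb (not_lt.1 hblt)
  subst hb1
  have h0J : (0:ℝ) ∈ Set.Ioo a 1 := ⟨ha0, one_pos⟩
  have h1y : ∀ y ∈ Set.Ioo a 1, (0:ℝ) < 1 - y^2 := by
    intro y hy
    have h1 : -1 < y := lt_of_le_of_lt ha hy.1
    nlinarith [hy.2]
  -- conserved quantity
  set Q : ℝ → ℝ := fun y => (1-y^2)*(m y)^2*(ρ y)^2 with hQdef
  have hQ : ∀ y ∈ Set.Ioo a 1, HasDerivAt Q
      (((-(2*y))*(m y)^2 + (1-y^2)*(2*(m y)^1*(4 * m y * θ y / (1 - y^2))))*(ρ y)^2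
        + ((1-y^2)*(m y)^2)*(2*(ρ y)^1*((y*ρ y - 4*θ y*ρ y)/(1-y^2)))) y := by
    intro y hy
    have hA : HasDerivAt (fun y : ℝ => 1-y^2) (-(2*y)) y := by
      simpa using ((hasDerivAt_pow 2 y).const_sub 1)
    exact ((hA.mul ((hm y hy).pow 2)).mul ((hρ y hy).pow 2))
  have hQ0 : ∀ y ∈ Set.Ioo a 1, HasDerivAt Q 0 y := by
    intro y hy
    have h := hQ y hy
    have hne := (h1y y hy).ne'
    have : ((-(2*y))*(m y)^2 + (1-y^2)*(2*(m y)^1*(4 * m y * θ y / (1 - y^2))))*(ρ y)^2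
        + ((1-y^2)*(m y)^2)*(2*(ρ y)^1*((y*ρ y - 4*θ y*ρ y)/(1-y^2))) = 0 := by
      field_simp
      ring
    rwa [this] at h
  have hQconst : ∀ y ∈ Set.Ioo a 1, Q y = Q 0 := by
    intro y hy
    exact constOn_aux hQ0 (fun _ _ => rfl) hy h0J
  have hQpos : 0 < Q 0 := by
    have : Q 0 = (1-(0:ℝ)^2)*(m 0)^2*(ρ 0)^2 := rfl
    rw [this]; positivity
  have hmne : ∀ y ∈ Set.Ioo a 1, m y ≠ 0 := by
    intro y hy hmy
    have := hQconst y hy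
    rw [hQdef] at this
    simp only [hmy] at this
    have hp : 0 < (m 0)^2 * (ρ 0)^2 := by positivity
    norm_num at this
    rcases this with h | h
    · exact hm0.ne' h
    · exact hρ0.ne' h
  have hρne : ∀ y ∈ Set.Ioo a 1, ρ y ≠ 0 := by
    intro y hy hry
    have := hQconst y hy
    rw [hQdef] at this
    simp only [hry] at this
    have hp : 0 < (m 0)^2 * (ρ 0)^2 := by positivity
    norm_num at this
    rcases this with h | h
    · exact hm0.ne' h
    · exact hρ0.ne' h
  have hmpos : ∀ y ∈ Set.Ioo a 1, 0 < m y :=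
    pos_on_aux ha0 one_pos
      (fun y hy => ((hm y hy).continuousAt).continuousWithinAt) hm0 hmne
  have hρpos : ∀ y ∈ Set.Ioo a 1, 0 < ρ y :=
    pos_on_aux ha0 one_pos
      (fun y hy => ((hρ y hy).continuousAt).continuousWithinAt) hρ0 hρne
  have hQval : ∀ y ∈ Set.Ioo a 1, (1-y^2)*(m y)^2*(ρ y)^2 = Q 0 := hQconst
  -- m^4 lower bound
  have hm4 : ∀ y ∈ Set.Ioo a 1, Q 0 ≤ (m y)^4 := by
    intro y hy
    have h1 := hfg y hy
    have h2 := hQval y hy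
    have h3 := h1y y hy
    have h4 : (ρ y)^2 * (1 - y^2) ≤ (m y)^2 := by
      have h5 : ((ρ y)^2 + (θ y)^2) * (1-y^2) = (m y)^2 := by
        rw [h1]; exact div_mul_cancel₀ _ h3.ne'
      nlinarith [sq_nonneg (θ y)]
    nlinarith [sq_nonneg (m y), sq_nonneg (ρ y)]
  set Q0 := Q 0 with hQ0def
  set s2 := Real.sqrt Q0 with hs2def
  have hs2pos : 0 < s2 := Real.sqrt_pos.2 hQpos
  have hs2sq : s2^2 = Q0 := Real.sq_sqrt hQpos.le
  have hm2 : ∀ y ∈ Set.Ioo a 1, s2 ≤ (m y)^2 := by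
    intro y hy
    have h4 := hm4 y hy
    have : s2 ≤ Real.sqrt ((m y)^4) := Real.sqrt_le_sqrt h4
    rwa [show (m y)^4 = ((m y)^2)^2 by ring, Real.sqrt_sq (sq_nonneg _)] at this
  set C := Real.sqrt s2 with hCdef
  have hCpos : 0 < C := Real.sqrt_pos.2 hs2pos
  have hC2 : C^2 = s2 := Real.sq_sqrt hs2pos.le
  -- the tangent variable ξ = θ/ρ
  set ξ : ℝ → ℝ := fun y => θ y / ρ y with hξdef
  have hξ : ∀ y ∈ Set.Ioo a 1, HasDerivAt ξ (8*(m y)^2/((1-y^2)^2 * ρ y)) y := by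
    intro y hy
    have h := ((hθ y hy).div (hρ y hy) (hρne y hy))
    have hP := (h1y y hy).ne'
    have hfg' : ((ρ y)^2 + (θ y)^2) * (1-y^2) = (m y)^2 := by
      rw [hfg y hy]; exact div_mul_cancel₀ _ hP
    have heq : ((4*(m y)^2/(1-y^2) + 4*(ρ y)^2 + y*θ y)/(1-y^2) * ρ y
        - θ y * ((y*ρ y - 4*θ y*ρ y)/(1-y^2))) / (ρ y)^2
        = 8*(m y)^2/((1-y^2)^2 * ρ y) := by
      rw [← hfg']
      field_simp [hρne y hy]
      ring
    rwa [heq] at h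
  -- derivative lower bound on [0,1)
  have hbound1 : ∀ y ∈ Set.Ico (0:ℝ) 1,
      C/2 * (1-y)⁻¹ ≤ 8*(m y)^2/((1-y^2)^2 * ρ y) := by
    intro y hy
    have hyJ : y ∈ Set.Ioo a 1 := ⟨lt_of_lt_of_le ha0 hy.1, hy.2⟩
    have hP := h1y y hyJ
    have h1my : (0:ℝ) < 1 - y := by linarith [hy.2]
    have h1py : (0:ℝ) < 1 + y := by linarith [hy.1]
    have h1py2 : 1 + y ≤ 2 := by nlinarith [hy.2]
    have hρp := hρpos y hyJ
    have hmp := hmpos y hyJ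
    have hq := hQval y hyJ
    have hm2' := hm2 y hyJ
    have hP3 : (1-y^2)^3 ≤ 8*(1-y)^2 := by
      have e : (1-y^2)^3 = (1-y)^3*(1+y)^3 := by ring
      rw [e]
      have h1 : (1-y)^3 ≤ (1-y)^2 :=
        pow_le_pow_of_le_one h1my.le (by linarith [hy.1]) (by norm_num)
      have h2 : (1+y)^3 ≤ 8 := by
        calc (1+y)^3 ≤ 2^3 := pow_le_pow_left₀ h1py.le h1py2 3
          _ = 8 := by norm_num
      calc (1-y)^3*(1+y)^3 ≤ (1-y)^2*(1+y)^3 :=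
            mul_le_mul_of_nonneg_right h1 (pow_nonneg h1py.le 3)
        _ ≤ (1-y)^2*8 := mul_le_mul_of_nonneg_left h2 (sq_nonneg _)
        _ = 8*(1-y)^2 := by ring
    have hm6 : s2*Q0 ≤ ((m y)^2)^3 := by
      have := pow_le_pow_left₀ hs2pos.le hm2' 3
      calc s2*Q0 = s2^3 := by rw [← hs2sq]; ring
        _ ≤ ((m y)^2)^3 := this
    have hstep : s2*((1-y^2)^2*ρ y)^2*(m y)^2
        ≤ 256*((1-y)*(m y)^2)^2*(m y)^2 := by
      have e1 : s2*((1-y^2)^2*ρ y)^2*(m y)^2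
          = s2*(1-y^2)^3*((1-y^2)*(m y)^2*(ρ y)^2) := by ring
      rw [e1, hq]
      calc s2*(1-y^2)^3*Q0 ≤ s2*(8*(1-y)^2)*Q0 := by
            apply mul_le_mul_of_nonneg_right _ hQpos.le
            exact mul_le_mul_of_nonneg_left hP3 hs2pos.le
        _ = 8*(1-y)^2*(s2*Q0) := by ring
        _ ≤ 8*(1-y)^2*(((m y)^2)^3) := by
            apply mul_le_mul_of_nonneg_left hm6 (by positivity)
        _ ≤ 256*((1-y)*(m y)^2)^2*(m y)^2 := by
            have hnn : (0:ℝ) ≤ (1-y)^2*((m y)^2)^3 := by positivity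
            nlinarith [hnn]
    have h3 : C*((1-y^2)^2*ρ y)*(m y) ≤ 16*((1-y)*(m y)^2)*(m y) := by
      have hsq : (C*((1-y^2)^2*ρ y)*(m y))^2 ≤ (16*((1-y)*(m y)^2)*(m y))^2 := by
        have e2 : (C*((1-y^2)^2*ρ y)*(m y))^2 = s2*((1-y^2)^2*ρ y)^2*(m y)^2 := by
          rw [← hC2]; ring
        have e3 : (16*((1-y)*(m y)^2)*(m y))^2 = 256*((1-y)*(m y)^2)^2*(m y)^2 := by ring
        rw [e2, e3]; exact hstep
      exact (pow_le_pow_iff_left₀ (by positivity) (by positivity) two_ne_zero).1 hsq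
    have key : C*((1-y^2)^2*ρ y) ≤ 16*((1-y)*(m y)^2) :=
      le_of_mul_le_mul_right h3 hmp
    rw [show C/2 * (1-y)⁻¹ = C/(2*(1-y)) by field_simp]
    rw [div_le_div_iff₀ (by positivity) (by positivity)]
    have e : 8*(m y)^2*(2*(1-y)) = 16*((1-y)*(m y)^2) := by ring
    linarith [key]
  -- derivative of log (1 - y)
  have hlog : ∀ y : ℝ, y < 1 → HasDerivAt (fun t : ℝ => Real.log (1-t)) (-(1-y)⁻¹) y := by
    intro y hy1
    have h1 : HasDerivAt (fun t : ℝ => 1-t) (-1) y := by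
      simpa using ((hasDerivAt_id y).const_sub 1)
    have h2 := (Real.hasDerivAt_log (by linarith : (1:ℝ)-y ≠ 0)).comp y h1
    rw [show -(1-y)⁻¹ = (1-y)⁻¹ * -1 by ring]; exact h2
  -- stage 1 : ξ grows at least logarithmically on [0,1)
  set φ : ℝ → ℝ := fun t => ξ t + C/2 * Real.log (1-t) with hφdef
  have hφ : ∀ y ∈ Set.Ico (0:ℝ) 1, HasDerivAt φ
      (8*(m y)^2/((1-y^2)^2 * ρ y) + C/2 * (-(1-y)⁻¹)) y := by
    intro y hy
    have hyJ : y ∈ Set.Ioo a 1 := ⟨lt_of_lt_of_le ha0 hy.1, hy.2⟩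
    exact (hξ y hyJ).add ((hlog y hy.2).const_mul (C/2))
  have hφmono : MonotoneOn φ (Set.Ico (0:ℝ) 1) := by
    apply monoOn_aux hφ
    intro y hy
    have := hbound1 y (Set.Ioo_subset_Ico_self hy)
    linarith
  have key1 : ∀ y ∈ Set.Ico (0:ℝ) 1, ξ 0 - C/2 * Real.log (1-y) ≤ ξ y := by
    intro y hy
    have h0m : (0:ℝ) ∈ Set.Ico (0:ℝ) 1 := ⟨le_refl 0, one_pos⟩
    have := hφmono h0m hy hy.1
    have e0 : φ 0 = ξ 0 := by
      simp [hφdef]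
    rw [e0] at this
    have e1 : φ y = ξ y + C/2 * Real.log (1-y) := rfl
    rw [e1] at this
    linarith
  -- the point y₁ where ξ ≥ 2
  set y₁ : ℝ := 1 - Real.exp (-(2*(2+|ξ 0|))/C) with hy₁def
  have hexp_pos : 0 < Real.exp (-(2*(2+|ξ 0|))/C) := Real.exp_pos _
  have hy₁lt : y₁ < 1 := by simp only [hy₁def]; linarith
  have hy₁0 : 0 ≤ y₁ := by
    have harg : -(2*(2+|ξ 0|))/C ≤ 0 := by
      apply div_nonpos_of_nonpos_of_nonneg _ hCpos.le
      have : (0:ℝ) ≤ 2*(2+|ξ 0|) := by positivity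
      linarith
    have := Real.exp_le_one_iff.2 harg
    simp only [hy₁def]; linarith
  have hy₁J : y₁ ∈ Set.Ioo a 1 := ⟨lt_of_lt_of_le ha0 hy₁0, hy₁lt⟩
  have hlogy₁ : Real.log (1-y₁) = -(2*(2+|ξ 0|))/C := by
    rw [show (1:ℝ)-y₁ = Real.exp (-(2*(2+|ξ 0|))/C) by rw [hy₁def]; ring]
    exact Real.log_exp _
  have hξy₁ : 2 ≤ ξ y₁ := by
    have h := key1 y₁ ⟨hy₁0, hy₁lt⟩
    rw [hlogy₁] at h
    have e : C/2 * (-(2*(2+|ξ 0|))/C) = -(2+|ξ 0|) := by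
      field_simp
    rw [e] at h
    have := neg_abs_le (ξ 0)
    linarith
  -- ξ is monotone on [y₁, 1)
  have hξmono : MonotoneOn ξ (Set.Ico y₁ 1) := by
    apply monoOn_aux (F' := fun y => 8*(m y)^2/((1-y^2)^2 * ρ y))
    · intro y hy
      exact hξ y ⟨lt_of_lt_of_le ha0 (le_trans hy₁0 hy.1), hy.2⟩
    · intro y hy
      have hyJ : y ∈ Set.Ioo a 1 := ⟨lt_of_lt_of_le ha0 (le_trans hy₁0 hy.1.le), hy.2⟩
      have hP := h1y y hyJ
      have hρp := hρpos y hyJ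
      positivity
  have hξge : ∀ y ∈ Set.Ico y₁ 1, 2 ≤ ξ y := by
    intro y hy
    exact le_trans hξy₁ (hξmono ⟨le_refl y₁, hy₁lt⟩ hy hy.1)
  -- stage 2 : 1/m decreases too fast
  set χ : ℝ → ℝ := fun t => (m t)⁻¹ - Real.log (1-t) with hχdef
  have hχanti : AntitoneOn χ (Set.Ico y₁ 1) := by
    apply antiOn_aux (F' := fun y => -(4 * m y * θ y / (1 - y^2))/(m y)^2 - (-(1-y)⁻¹))
    · intro y hy
      have hyJ : y ∈ Set.Ioo a 1 := ⟨lt_of_lt_of_le ha0 (le_trans hy₁0 hy.1), hy.2⟩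
      exact ((hm y hyJ).inv (hmne y hyJ)).sub (hlog y hy.2)
    · intro y hy
      have hy0 : 0 ≤ y := le_trans hy₁0 hy.1.le
      have hyJ : y ∈ Set.Ioo a 1 := ⟨lt_of_lt_of_le ha0 hy0, hy.2⟩
      have hyI : y ∈ Set.Ico y₁ 1 := ⟨hy.1.le, hy.2⟩
      have hP := h1y y hyJ
      have h1my : (0:ℝ) < 1 - y := by linarith [hy.2]
      have h1py : (0:ℝ) < 1 + y := by linarith [hy0]
      have hρp := hρpos y hyJ
      have hmp := hmpos y hyJ
      -- θ ≥ 2 ρ > 0  and  2 θ ≥ m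
      have hξ2 : 2 ≤ θ y / ρ y := hξge y hyI
      have hθ2ρ : 2 * ρ y ≤ θ y := by
        have := (le_div_iff₀ hρp).1 hξ2
        linarith
      have hθp : 0 < θ y := by linarith
      have h2θm : m y ≤ 2 * θ y := by
        have hfg' := hfg y hyJ
        have hPle1 : 1 - y^2 ≤ 1 := by nlinarith [hy0]
        have hsq : (m y)^2 ≤ (2*θ y)^2 := by
          have h5 : ((ρ y)^2 + (θ y)^2)*(1-y^2) = (m y)^2 := by
            rw [hfg']; exact div_mul_cancel₀ _ hP.ne'
          nlinarith [h5, hP, hPle1,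
            mul_le_mul_of_nonneg_left hPle1 (by positivity : (0:ℝ) ≤ (ρ y)^2+(θ y)^2),
            mul_nonneg (by linarith : (0:ℝ) ≤ θ y - 2*ρ y) hθp.le,
            mul_nonneg (by linarith : (0:ℝ) ≤ θ y - 2*ρ y) hρp.le]
        exact (pow_le_pow_iff_left₀ hmp.le (by linarith) two_ne_zero).1 hsq
      -- conclude the derivative is ≤ 0
      have e : -(4 * m y * θ y / (1 - y^2))/(m y)^2 = -(4*θ y/((1-y^2)*(m y))) := by
        field_simp [hP.ne', hmp.ne']
      rw [e]
      have hineq : (1-y)⁻¹ ≤ 4*θ y/((1-y^2)*(m y)) := by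
        rw [inv_eq_one_div, div_le_div_iff₀ h1my (by positivity)]
        have h1py2 : 1 + y ≤ 2 := by linarith [hy.2]
        nlinarith [mul_le_mul_of_nonneg_left h2θm h1my.le,
          mul_pos h1my hθp, mul_nonneg (mul_nonneg h1my.le hθp.le) (by linarith : (0:ℝ) ≤ 2 - (1+y))]
      linarith
  -- final contradiction
  set y₂ : ℝ := max y₁ (1 - Real.exp (-(χ y₁ + 1))) with hy₂def
  have hexp2 : 0 < Real.exp (-(χ y₁ + 1)) := Real.exp_pos _
  have hy₂lt : y₂ < 1 := by
    apply max_lt hy₁lt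
    linarith
  have hy₂I : y₂ ∈ Set.Ico y₁ 1 := ⟨le_max_left _ _, hy₂lt⟩
  have h1my₂ : 0 < 1 - y₂ := by linarith
  have hlog2 : Real.log (1-y₂) ≤ -(χ y₁ + 1) := by
    have h1 : 1 - y₂ ≤ Real.exp (-(χ y₁ + 1)) := by
      have := le_max_right y₁ (1 - Real.exp (-(χ y₁ + 1)))
      simp only [hy₂def]
      linarith [this]
    calc Real.log (1-y₂) ≤ Real.log (Real.exp (-(χ y₁ + 1))) :=
          Real.log_le_log h1my₂ h1
      _ = -(χ y₁ + 1) := Real.log_exp _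
  have hanti2 : χ y₂ ≤ χ y₁ := hχanti ⟨le_refl y₁, hy₁lt⟩ hy₂I (le_max_left _ _)
  have hy₂J : y₂ ∈ Set.Ioo a 1 := ⟨lt_of_lt_of_le ha0 (le_trans hy₁0 hy₂I.1), hy₂lt⟩
  have hmy₂ : 0 < m y₂ := hmpos y₂ hy₂J
  have hinv : 0 < (m y₂)⁻¹ := inv_pos.2 hmy₂
  have : (m y₂)⁻¹ = χ y₂ + Real.log (1-y₂) := by simp [hχdef]
  rw [this] at hinv
  linarith
private lemma hasDerivAt_creal {F : ℝ → ℂ} {d : ℂ} {y : ℝ} (h : HasDerivAt F d y) :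
    HasDerivAt (fun t => (F t).re) d.re y := by
  exact (Complex.reCLM.hasFDerivAt.comp_hasDerivAt y h)

private lemma hasDerivAt_cimag {F : ℝ → ℂ} {d : ℂ} {y : ℝ} (h : HasDerivAt F d y) :
    HasDerivAt (fun t => (F t).im) d.im y := by
  exact (Complex.imCLM.hasFDerivAt.comp_hasDerivAt y h)

private lemma right_endpoint (U V : ℝ → ℂ) (a b : ℝ)
    (ha : -1 ≤ a) (hb : b ≤ 1)
    (hS : SolvesS 1 1 U V (Ioo a b)) (h0 : (0 : ℝ) ∈ Ioo a b)
    (heq : ‖U 0‖ = ‖V 0‖)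
    (hpos : 0 < ‖U 0‖)
    (hphase : |((starRingEnd ℂ) (U 0) * V 0).im| < ‖U 0‖ * ‖V 0‖) :
    b < 1 := by
  obtain ⟨hCU, hCV, hode⟩ := hS
  have ha0 : a < 0 := h0.1
  have hb0 : 0 < b := h0.2
  set f : ℝ → ℝ := fun t => (U t).re^2 + (U t).im^2 with hfdef
  set g : ℝ → ℝ := fun t => (V t).re^2 + (V t).im^2 with hgdef
  set ρ : ℝ → ℝ := fun t => (U t).re*(V t).re + (U t).im*(V t).im with hρdef
  set θ : ℝ → ℝ := fun t => (U t).re*(V t).im - (U t).im*(V t).re with hθdef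
  set m : ℝ → ℝ := fun t => (t+1)*f t with hmdef
  set n : ℝ → ℝ := fun t => (1-t)*g t with hndef
  have hUd : ∀ y ∈ Set.Ioo a b, HasDerivAt U (deriv U y) y := fun y hy =>
    ((hCU.differentiableOn one_ne_zero).differentiableAt (isOpen_Ioo.mem_nhds hy)).hasDerivAt
  have hVd : ∀ y ∈ Set.Ioo a b, HasDerivAt V (deriv V y) y := fun y hy =>
    ((hCV.differentiableOn one_ne_zero).differentiableAt (isOpen_Ioo.mem_nhds hy)).hasDerivAt
  have hFfun : ∀ y, Ffun 1 1 U V y = ((f y + g y : ℝ) : ℂ) := by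
    intro y
    simp only [Ffun, Nat.cast_one, one_mul, pow_one, Nat.sub_self, pow_zero, mul_one,
      Complex.sq_norm, Complex.normSq_apply, hfdef, hgdef]
    push_cast
    ring
  have hGfun : ∀ y, Gfun 1 1 U V y = ((2 * ρ y : ℝ) : ℂ) := by
    intro y
    simp only [Gfun, Rfun, Nat.cast_one, one_mul, Nat.sub_self, pow_zero, pow_one, hρdef]
    rw [Complex.ext_iff]
    constructor <;>
      simp [Complex.mul_re, Complex.mul_im] <;> ring
  have hcoef : ((1 + 1 - 1 : ℕ) : ℂ) = 1 := by norm_num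
  have hdU : ∀ y ∈ Set.Ioo a b, 2*((y:ℂ)+1) * deriv U y
      = -Complex.I*(((2*(f y + g y) : ℝ) : ℂ)*V y + ((4*ρ y : ℝ) : ℂ)*U y) - U y := by
    intro y hy
    have e := (hode y hy).1
    rw [hFfun y, hGfun y, hcoef] at e
    push_cast at e ⊢
    linear_combination (-2*Complex.I) * e
      + (2*((y:ℂ)+1)*deriv U y + U y) * Complex.I_mul_I
  have hdV : ∀ y ∈ Set.Ioo a b, 2*((y:ℂ)-1) * deriv V y
      = -Complex.I*(((2*(f y + g y) : ℝ) : ℂ)*U y + ((4*ρ y : ℝ) : ℂ)*V y) - V y := by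
    intro y hy
    have e := (hode y hy).2
    rw [hFfun y, hGfun y, hcoef] at e
    push_cast at e ⊢
    linear_combination (-2*Complex.I) * e
      + (2*((y:ℂ)-1)*deriv V y + V y) * Complex.I_mul_I
  -- solved component forms
  have comps : ∀ y ∈ Set.Ioo a b,
      (deriv U y).re = (2*(f y+g y)*(V y).im + 4*ρ y*(U y).im - (U y).re)/(2*(y+1))
      ∧ (deriv U y).im = (-(2*(f y+g y)*(V y).re + 4*ρ y*(U y).re) - (U y).im)/(2*(y+1))
      ∧ (deriv V y).re = (2*(f y+g y)*(U y).im + 4*ρ y*(V y).im - (V y).re)/(2*(y-1))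
      ∧ (deriv V y).im = (-(2*(f y+g y)*(U y).re + 4*ρ y*(V y).re) - (V y).im)/(2*(y-1)) := by
    intro y hy
    have hy1 : (0:ℝ) < y + 1 := by have := lt_of_le_of_lt ha hy.1; linarith
    have hy2 : y - 1 < 0 := by have := lt_of_lt_of_le hy.2 hb; linarith
    have h1 := hdU y hy
    have h2 := hdV y hy
    have e1 := congrArg Complex.re h1
    have e2 := congrArg Complex.im h1
    have e3 := congrArg Complex.re h2
    have e4 := congrArg Complex.im h2
    simp only [Complex.add_re, Complex.add_im, Complex.sub_re, Complex.sub_im,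
      Complex.mul_re, Complex.mul_im, Complex.neg_re, Complex.neg_im,
      Complex.I_re, Complex.I_im, Complex.ofReal_re, Complex.ofReal_im,
      Complex.re_ofNat, Complex.im_ofNat, Complex.one_re, Complex.one_im] at e1 e2 e3 e4
    refine ⟨?_, ?_, ?_, ?_⟩
    · rw [eq_div_iff (by linarith : 2*(y+1) ≠ 0)]; linear_combination e1
    · rw [eq_div_iff (by linarith : 2*(y+1) ≠ 0)]; linear_combination e2
    · rw [eq_div_iff (by linarith : 2*(y-1) ≠ 0)]; linear_combination e3
    · rw [eq_div_iff (by linarith : 2*(y-1) ≠ 0)]; linear_combination e4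
  -- real derivative facts (general form)
  have hm' : ∀ y ∈ Set.Ioo a b, HasDerivAt m (2*(f y + g y)*θ y) y := by
    intro y hy
    have hy1 : (0:ℝ) < y + 1 := by have := lt_of_le_of_lt ha hy.1; linarith
    have hf' := ((hasDerivAt_creal (hUd y hy)).pow 2).add ((hasDerivAt_cimag (hUd y hy)).pow 2)
    have h := (((hasDerivAt_id y).add_const (1:ℝ)).mul hf')
    refine h.congr_deriv ?_
    simp only [id, Pi.add_apply, Pi.sub_apply, Pi.mul_apply, Pi.pow_apply, Pi.one_apply,
      Nat.cast_ofNat, Nat.reduceSub, pow_one]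
    obtain ⟨c1, c2, c3, c4⟩ := comps y hy
    rw [c1, c2]
    simp only [hfdef, hgdef, hθdef, hρdef]
    have hne1 : 2*(y+1) ≠ 0 := by linarith
    field_simp [hne1]
    ring
  have hn' : ∀ y ∈ Set.Ioo a b, HasDerivAt n (2*(f y + g y)*θ y) y := by
    intro y hy
    have hy2 : y - 1 < 0 := by have := lt_of_lt_of_le hy.2 hb; linarith
    have hg' := ((hasDerivAt_creal (hVd y hy)).pow 2).add ((hasDerivAt_cimag (hVd y hy)).pow 2)
    have h := (((hasDerivAt_const y (1:ℝ)).sub (hasDerivAt_id y)).mul hg')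
    refine h.congr_deriv ?_
    simp only [id, Pi.add_apply, Pi.sub_apply, Pi.mul_apply, Pi.pow_apply, Pi.one_apply,
      Nat.cast_ofNat, Nat.reduceSub, pow_one]
    obtain ⟨c1, c2, c3, c4⟩ := comps y hy
    rw [c3, c4]
    simp only [hfdef, hgdef, hθdef, hρdef]
    have hne2 : 2*(y-1) ≠ 0 := by linarith
    field_simp [hne2, (by linarith : y - 1 ≠ 0)]
    ring
  have hρ' : ∀ y ∈ Set.Ioo a b, HasDerivAt ρ ((y*ρ y - 4*θ y*ρ y)/(1-y^2)) y := by
    intro y hy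
    have hy1 : (0:ℝ) < y + 1 := by have := lt_of_le_of_lt ha hy.1; linarith
    have hy2 : y - 1 < 0 := by have := lt_of_lt_of_le hy.2 hb; linarith
    have hP : (0:ℝ) < 1 - y^2 := by nlinarith
    have h := ((hasDerivAt_creal (hUd y hy)).mul (hasDerivAt_creal (hVd y hy))).add
      ((hasDerivAt_cimag (hUd y hy)).mul (hasDerivAt_cimag (hVd y hy)))
    refine h.congr_deriv ?_
    obtain ⟨c1, c2, c3, c4⟩ := comps y hy
    rw [c1, c2, c3, c4]
    simp only [hfdef, hgdef, hθdef, hρdef]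
    have hne1 : 2*(y+1) ≠ 0 := by linarith
    have hne2 : 2*(y-1) ≠ 0 := by linarith
    field_simp [hne1, hne2, hP.ne', (by linarith : y + 1 ≠ 0), (by linarith : y - 1 ≠ 0)]
    ring
  have hθ' : ∀ y ∈ Set.Ioo a b,
      HasDerivAt θ (((f y+g y)*(m y+n y) + 4*ρ y^2 + y*θ y)/(1-y^2)) y := by
    intro y hy
    have hy1 : (0:ℝ) < y + 1 := by have := lt_of_le_of_lt ha hy.1; linarith
    have hy2 : y - 1 < 0 := by have := lt_of_lt_of_le hy.2 hb; linarith
    have hP : (0:ℝ) < 1 - y^2 := by nlinarith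
    have h := ((hasDerivAt_creal (hUd y hy)).mul (hasDerivAt_cimag (hVd y hy))).sub
      ((hasDerivAt_cimag (hUd y hy)).mul (hasDerivAt_creal (hVd y hy)))
    refine h.congr_deriv ?_
    obtain ⟨c1, c2, c3, c4⟩ := comps y hy
    rw [c1, c2, c3, c4]
    simp only [hfdef, hgdef, hθdef, hρdef, hmdef, hndef]
    have hne1 : 2*(y+1) ≠ 0 := by linarith
    have hne2 : 2*(y-1) ≠ 0 := by linarith
    field_simp [hne1, hne2, hP.ne', (by linarith : y + 1 ≠ 0), (by linarith : y - 1 ≠ 0)]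
    ring
  -- m = n on J
  have hsub : ∀ y ∈ Set.Ioo a b, HasDerivAt (fun t => m t - n t) 0 y := by
    intro y hy
    have h := (hm' y hy).sub (hn' y hy)
    rwa [sub_self] at h
  have hf0 : f 0 = ‖U 0‖^2 := by
    rw [Complex.sq_norm, Complex.normSq_apply]
    simp only [hfdef]
    ring
  have hg0 : g 0 = ‖V 0‖^2 := by
    rw [Complex.sq_norm, Complex.normSq_apply]
    simp only [hgdef]
    ring
  have hmneq : ∀ y ∈ Set.Ioo a b, m y = n y := by
    intro y hy
    have h := constOn_aux hsub (fun _ _ => rfl) hy h0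
    have e0 : m 0 - n 0 = 0 := by
      simp only [hmdef, hndef]
      norm_num
      have : f 0 = g 0 := by rw [hf0, hg0, heq]
      linarith [this]
    have : m y - n y = 0 := by rw [h, e0]
    linarith
  -- the simplified facts for core_blowup
  have hmA : ∀ y ∈ Set.Ioo a b, HasDerivAt m (4*m y*θ y/(1-y^2)) y := by
    intro y hy
    have hy1 : (0:ℝ) < y + 1 := by have := lt_of_le_of_lt ha hy.1; linarith
    have hy2 : y - 1 < 0 := by have := lt_of_lt_of_le hy.2 hb; linarith
    have hP : (0:ℝ) < 1 - y^2 := by nlinarith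
    have h := hm' y hy
    convert h using 1
    have hEq := hmneq y hy
    simp only [hmdef, hndef] at hEq ⊢
    rw [div_eq_iff hP.ne']
    linear_combination (2*θ y*(1+y)) * hEq
  have hθA : ∀ y ∈ Set.Ioo a b,
      HasDerivAt θ ((4*(m y)^2/(1-y^2) + 4*(ρ y)^2 + y*θ y)/(1-y^2)) y := by
    intro y hy
    have hy1 : (0:ℝ) < y + 1 := by have := lt_of_le_of_lt ha hy.1; linarith
    have hy2 : y - 1 < 0 := by have := lt_of_lt_of_le hy.2 hb; linarith
    have hP : (0:ℝ) < 1 - y^2 := by nlinarith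
    have h := hθ' y hy
    convert h using 1
    have hEq := hmneq y hy
    simp only [hmdef, hndef] at hEq
    have e : 4*(m y)^2/(1-y^2) = (f y+g y)*(m y+n y) := by
      rw [div_eq_iff hP.ne']
      simp only [hmdef, hndef]
      linear_combination ((1+y)*((1-y)*g y) + (3+y)*((y+1)*f y)) * hEq
    rw [e]
  have hfgA : ∀ y ∈ Set.Ioo a b, (ρ y)^2 + (θ y)^2 = (m y)^2/(1-y^2) := by
    intro y hy
    have hy1 : (0:ℝ) < y + 1 := by have := lt_of_le_of_lt ha hy.1; linarith
    have hy2 : y - 1 < 0 := by have := lt_of_lt_of_le hy.2 hb; linarith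
    have hP : (0:ℝ) < 1 - y^2 := by nlinarith
    have hEq := hmneq y hy
    simp only [hmdef, hndef, hfdef, hgdef] at hEq
    rw [eq_div_iff hP.ne']
    simp only [hmdef, hndef, hfdef, hgdef, hρdef, hθdef]
    linear_combination (-((y+1)*((U y).re^2+(U y).im^2))) * hEq
  -- initial conditions
  have hm0 : 0 < m 0 := by
    have : m 0 = f 0 := by simp [hmdef]
    rw [this, hf0]
    positivity
  have hθ0c : ((starRingEnd ℂ) (U 0) * V 0).im = θ 0 := by
    simp only [Complex.mul_im, Complex.conj_re, Complex.conj_im, hθdef]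
    ring
  have hρ0sq : 0 < (ρ 0)^2 := by
    have hlag : (ρ 0)^2 + (θ 0)^2 = f 0 * g 0 := by
      simp only [hρdef, hθdef, hfdef, hgdef]
      ring
    have hθlt : (θ 0)^2 < f 0 * g 0 := by
      rw [hθ0c] at hphase
      have h1 : |θ 0|^2 < (‖U 0‖ * ‖V 0‖)^2 := by
        have h2 : (0:ℝ) ≤ |θ 0| := abs_nonneg _
        nlinarith [hphase]
      rw [_root_.sq_abs] at h1
      calc (θ 0)^2 < (‖U 0‖ * ‖V 0‖)^2 := h1
        _ = f 0 * g 0 := by rw [hf0, hg0]; ring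
    linarith
  have hρ0ne : ρ 0 ≠ 0 := by
    intro h
    rw [h] at hρ0sq
    norm_num at hρ0sq
  rcases hρ0ne.lt_or_gt with hneg | hpos
  · -- use -ρ
    refine core_blowup m (fun t => -ρ t) θ a b ha hb ha0 hb0 hmA ?_ ?_ ?_ hm0 (by simpa using hneg)
    · intro y hy
      simpa [neg_sq] using hθA y hy
    · intro y hy
      have h := (hρ' y hy).neg
      refine h.congr_deriv ?_
      ring
    · intro y hy
      simpa [neg_sq] using hfgA y hy
  · exact core_blowup m ρ θ a b ha hb ha0 hb0 hmA hθA hρ' hfgA hm0 hpos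

/-- for `k = ℓ = 1`, a solution of (S) on an open interval
`(a, b) ⊆ (-1,1)` containing `0` with `|U(0)| = |V(0)| > 0` that does not lie on
the invariant phase lines (`|Im(conj(U(0)) V(0))| < |U(0)| |V(0)|`) extends
neither to `y → 1` nor to `y → -1`: necessarily `b < 1` and `a > -1`. -/
theorem no_extension_to_endpoints (U V : ℝ → ℂ) (a b : ℝ)
    (ha : -1 ≤ a) (hb : b ≤ 1)
    (hS : SolvesS 1 1 U V (Ioo a b)) (h0 : (0 : ℝ) ∈ Ioo a b)
    (heq : ‖U 0‖ = ‖V 0‖)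
    (hpos : 0 < ‖U 0‖)
    (hphase : |((starRingEnd ℂ) (U 0) * V 0).im| < ‖U 0‖ * ‖V 0‖) :
    b < 1 ∧ -1 < a := by

  constructor
  · exact right_endpoint U V a b ha hb hS h0 heq hpos hphase
  · -- reflect the solution
    obtain ⟨hCU, hCV, hode⟩ := hS
    set U2 : ℝ → ℂ := fun t => V (-t) with hU2
    set V2 : ℝ → ℂ := fun t => U (-t) with hV2
    have hmaps : ∀ x ∈ Set.Ioo (-b) (-a), -x ∈ Set.Ioo a b := by
      intro x hx
      exact ⟨by linarith [hx.2], by linarith [hx.1]⟩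
    have hnegC : ContDiffOn ℝ 1 (fun t : ℝ => -t) (Set.Ioo (-b) (-a)) :=
      (contDiff_neg).contDiffOn
    have hS2 : SolvesS 1 1 U2 V2 (Set.Ioo (-b) (-a)) := by
      refine ⟨hCV.comp hnegC hmaps, hCU.comp hnegC hmaps, ?_⟩
      intro y hy
      have hyJ : -y ∈ Set.Ioo a b := hmaps y hy
      obtain ⟨e1, e2⟩ := hode (-y) hyJ
      have hdU2 : deriv U2 y = -deriv V (-y) := by
        rw [hU2]; exact deriv_comp_neg V y
      have hdV2 : deriv V2 y = -deriv U (-y) := by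
        rw [hV2]; exact deriv_comp_neg U y
      have hR : Rfun U2 V2 y = Rfun U V (-y) := by
        simp only [Rfun, hU2, hV2]
        ring
      have hF : Ffun 1 1 U2 V2 y = Ffun 1 1 U V (-y) := by
        simp only [Ffun, hU2, hV2, hR, Nat.sub_self, pow_zero, mul_one]
        push_cast
        ring
      have hG : Gfun 1 1 U2 V2 y = Gfun 1 1 U V (-y) := by
        simp only [Gfun, Nat.sub_self, pow_zero, pow_one, hR]
      constructor
      · rw [hdU2, hF, hG]
        show Complex.I * ((↑y + 1) * -deriv V (-y) + _ * V (-y))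
          = Ffun 1 1 U V (-y) * U (-y) + Gfun 1 1 U V (-y) * V (-y)
        push_cast at e2 ⊢
        linear_combination e2
      · rw [hdV2, hF, hG]
        show Complex.I * ((↑y - 1) * -deriv U (-y) + _ * U (-y))
          = Ffun 1 1 U V (-y) * V (-y) + Gfun 1 1 U V (-y) * U (-y)
        push_cast at e1 ⊢
        linear_combination e1
    have h02 : (0:ℝ) ∈ Set.Ioo (-b) (-a) := ⟨by linarith [h0.2], by linarith [h0.1]⟩
    have hU20 : U2 0 = V 0 := by simp [hU2]
    have hV20 : V2 0 = U 0 := by simp [hV2]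
    have heq2 : ‖U2 0‖ = ‖V2 0‖ := by
      rw [hU20, hV20, heq]
    have hpos2 : 0 < ‖U2 0‖ := by
      rw [hU20, ← heq]; exact hpos
    have hphase2 : |((starRingEnd ℂ) (U2 0) * V2 0).im|
        < ‖U2 0‖ * ‖V2 0‖ := by
      rw [hU20, hV20]
      have e : ((starRingEnd ℂ) (V 0) * U 0).im = -(((starRingEnd ℂ) (U 0) * V 0).im) := by
        simp only [Complex.mul_im, Complex.conj_re, Complex.conj_im]
        ring
      rw [e, abs_neg, mul_comm (‖V 0‖) (‖U 0‖)]
      exact hphase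
    have := right_endpoint U2 V2 (-b) (-a) (by linarith) (by linarith) hS2 h02 heq2 hpos2 hphase2
    linarith
end

section
/- Let k = ℓ = 1. If (U, V) solves the self-similar system (S) on an open interval J ⊆ (−1,1), then the function y ↦ (1+y)·|U(y)|² − (1−y)·|V(y)|² is constant on J. In particular, if 0 ∈ J and |U(0)| = |V(0)|, then (1+y)·|U(y)|² = (1−y)·|V(y)|² for every y ∈ J. -/
open Set Complex Filter Topology

/-- pointwise algebraic identity -/
lemma key_alg (u v u' v' : ℂ) (y F : ℝ)
    (h1 : Complex.I*(((y:ℂ)+1)*u' + (1/2)*u)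
      = (F:ℂ)*v + (u*(starRingEnd ℂ) v + (starRingEnd ℂ) u * v)*u)
    (h2 : Complex.I*(((y:ℂ)-1)*v' + (1/2)*v)
      = (F:ℂ)*u + (u*(starRingEnd ℂ) v + (starRingEnd ℂ) u * v)*v) :
    u*(starRingEnd ℂ) u + ((y:ℂ)+1)*(u'*(starRingEnd ℂ) u + u*(starRingEnd ℂ) u')
      + (v*(starRingEnd ℂ) v + ((y:ℂ)-1)*(v'*(starRingEnd ℂ) v + v*(starRingEnd ℂ) v')) = 0 := by
  have h1' := congrArg (starRingEnd ℂ) h1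
  have h2' := congrArg (starRingEnd ℂ) h2
  simp only [map_add, map_sub, map_mul, conj_I, conj_ofReal, map_div₀, map_one, map_ofNat,
    Complex.conj_conj] at h1' h2'
  linear_combination (-Complex.I * (starRingEnd ℂ) u) * h1 + (Complex.I * u) * h1'
    + (-Complex.I * (starRingEnd ℂ) v) * h2 + (Complex.I * v) * h2'
    + (u*(starRingEnd ℂ) u + ((y:ℂ)+1)*(u'*(starRingEnd ℂ) u + u*(starRingEnd ℂ) u')
      + v*(starRingEnd ℂ) v + ((y:ℂ)-1)*(v'*(starRingEnd ℂ) v + v*(starRingEnd ℂ) v'))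
        * Complex.I_sq

/-- for `k = ℓ = 1`, the quantity `(1+y)|U(y)|² - (1-y)|V(y)|²` is a
first integral of the self-similar system (S); if moreover `0 ∈ J` and
`|U(0)| = |V(0)|`, then `(1+y)|U(y)|² = (1-y)|V(y)|²` on `J`. -/
theorem first_integral_k1l1 (U V : ℝ → ℂ) (a b : ℝ)
    (hab : Ioo a b ⊆ Ioo (-1 : ℝ) 1)
    (hS : SolvesS 1 1 U V (Ioo a b)) :
    (∀ y ∈ Ioo a b, ∀ z ∈ Ioo a b,
      (1 + y) * ‖U y‖ ^ 2 - (1 - y) * ‖V y‖ ^ 2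
        = (1 + z) * ‖U z‖ ^ 2 - (1 - z) * ‖V z‖ ^ 2) ∧
    ((0 : ℝ) ∈ Ioo a b → ‖U 0‖ = ‖V 0‖ →
      ∀ y ∈ Ioo a b,
        (1 + y) * ‖U y‖ ^ 2 = (1 - y) * ‖V y‖ ^ 2) := by
  obtain ⟨hU, hV, heq⟩ := hS
  set E : ℝ → ℝ := fun t =>
    (((t:ℂ)+1) * (U t * (starRingEnd ℂ) (U t))
      + ((t:ℂ)-1) * (V t * (starRingEnd ℂ) (V t))).re with hE
  have hEeq : ∀ t : ℝ, E t
      = (1 + t) * ‖U t‖ ^ 2 - (1 - t) * ‖V t‖ ^ 2 := by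
    intro t
    have h1 : ((t:ℂ)+1) * (U t * (starRingEnd ℂ) (U t))
        + ((t:ℂ)-1) * (V t * (starRingEnd ℂ) (V t))
        = ((((1+t) * ‖U t‖ ^ 2 - (1-t) * ‖V t‖ ^ 2 : ℝ)) : ℂ) := by
      rw [Complex.mul_conj, Complex.mul_conj, ← Complex.sq_norm, ← Complex.sq_norm]
      push_cast
      ring
    rw [hE]
    simp only [h1, Complex.ofReal_re]
  have hderiv : ∀ y ∈ Ioo a b, HasDerivAt E 0 y := by
    intro y hy
    have hyU : DifferentiableAt ℝ U y :=
      (hU.differentiableOn one_ne_zero).differentiableAt (isOpen_Ioo.mem_nhds hy)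
    have hyV : DifferentiableAt ℝ V y :=
      (hV.differentiableOn one_ne_zero).differentiableAt (isOpen_Ioo.mem_nhds hy)
    have hu := hyU.hasDerivAt
    have hv := hyV.hasDerivAt
    have hcu : HasDerivAt (fun t => (starRingEnd ℂ) (U t))
        ((starRingEnd ℂ) (deriv U y)) y :=
      Complex.conjCLE.hasFDerivAt.comp_hasDerivAt y hu
    have hcv : HasDerivAt (fun t => (starRingEnd ℂ) (V t))
        ((starRingEnd ℂ) (deriv V y)) y :=
      Complex.conjCLE.hasFDerivAt.comp_hasDerivAt y hv
    have hlin1 : HasDerivAt (fun t : ℝ => ((t:ℂ)+1)) 1 y := by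
      simpa using (Complex.ofRealCLM.hasDerivAt (x := y)).add_const (1:ℂ)
    have hlin2 : HasDerivAt (fun t : ℝ => ((t:ℂ)-1)) 1 y := by
      simpa using (Complex.ofRealCLM.hasDerivAt (x := y)).sub_const (1:ℂ)
    have hW := (hlin1.mul (hu.mul hcu)).add (hlin2.mul (hv.mul hcv))
    obtain ⟨e1, e2⟩ := heq y hy
    simp only [Ffun, Gfun, Rfun, Nat.cast_one, pow_one, pow_zero, one_mul, mul_one,
      Nat.add_sub_cancel] at e1 e2
    have e1' : Complex.I * (((y:ℂ)+1) * deriv U y + (1/2) * U y)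
        = ((‖U y‖ ^ 2 + ‖V y‖ ^ 2 : ℝ) : ℂ) * V y
          + (U y * (starRingEnd ℂ) (V y) + (starRingEnd ℂ) (U y) * V y) * U y := by
      convert e1 using 3 <;> norm_num
    have e2' : Complex.I * (((y:ℂ)-1) * deriv V y + (1/2) * V y)
        = ((‖U y‖ ^ 2 + ‖V y‖ ^ 2 : ℝ) : ℂ) * U y
          + (U y * (starRingEnd ℂ) (V y) + (starRingEnd ℂ) (U y) * V y) * V y := by
      convert e2 using 3 <;> norm_num
    have hzero := key_alg (U y) (V y) (deriv U y) (deriv V y) y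
      (‖U y‖ ^ 2 + ‖V y‖ ^ 2) e1' e2'
    have hd0 : 1 * (U y * (starRingEnd ℂ) (U y))
        + ((y:ℂ)+1) * (deriv U y * (starRingEnd ℂ) (U y) + U y * (starRingEnd ℂ) (deriv U y))
        + (1 * (V y * (starRingEnd ℂ) (V y))
          + ((y:ℂ)-1) * (deriv V y * (starRingEnd ℂ) (V y) + V y * (starRingEnd ℂ) (deriv V y)))
        = 0 := by linear_combination hzero
    simp only [Pi.mul_apply] at hW
    rw [hd0] at hW
    have h := Complex.reCLM.hasFDerivAt.comp_hasDerivAt y hW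
    simp only [Function.comp_def, Complex.reCLM_apply, map_zero, Complex.zero_re] at h
    exact h
  have hdiff : DifferentiableOn ℝ E (Ioo a b) :=
    fun y hy => (hderiv y hy).differentiableAt.differentiableWithinAt
  have hfd : ∀ y ∈ Ioo a b, fderivWithin ℝ E (Ioo a b) y = 0 := by
    intro y hy
    have h := ((hderiv y hy).hasFDerivAt.hasFDerivWithinAt).fderivWithin
      (isOpen_Ioo.uniqueDiffWithinAt hy)
    rw [h]
    ext t
    simp
  have hconst : ∀ y ∈ Ioo a b, ∀ z ∈ Ioo a b, E y = E z := fun y hy z hz =>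
    (convex_Ioo a b).is_const_of_fderivWithin_eq_zero hdiff hfd hy hz
  constructor
  · intro y hy z hz
    rw [← hEeq, ← hEeq]
    exact hconst y hy z hz
  · intro h0 habs y hy
    have h := hconst y hy 0 h0
    rw [hEeq, hEeq] at h
    simp only [add_zero, sub_zero, one_mul] at h
    rw [habs] at h
    linarith
end

section
/- Let ξ, η : J → ℝ be continuously differentiable functions on an interval J satisfying the planar autonomous system ξ'(τ) = 2·ξ(τ)³·η(τ) and η'(τ) = 8·ξ(τ)²·(1 − η(τ)²) for all τ ∈ J. Then the function τ ↦ ξ(τ)⁸·(1 − η(τ)²) is constant on J. -/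
open Set Filter Topology

/-- `E(ξ, η) = ξ⁸ (1 - η²)` is a first integral of the planar
autonomous system `ξ' = 2ξ³η`, `η' = 8ξ²(1 - η²)` on an interval `J`. -/
theorem planar_system_first_integral (J : Set ℝ) (hJ : J.OrdConnected)
    (ξ η : ℝ → ℝ)
    (hξ : ∀ τ ∈ J, HasDerivAt ξ (2 * ξ τ ^ 3 * η τ) τ)
    (hη : ∀ τ ∈ J, HasDerivAt η (8 * ξ τ ^ 2 * (1 - η τ ^ 2)) τ) :
    ∀ τ₁ ∈ J, ∀ τ₂ ∈ J,
      ξ τ₁ ^ 8 * (1 - η τ₁ ^ 2) = ξ τ₂ ^ 8 * (1 - η τ₂ ^ 2) := by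
  intro τ₁ h₁ τ₂ h₂
  have hE : ∀ τ ∈ J, HasDerivWithinAt (fun τ => ξ τ ^ 8 * (1 - η τ ^ 2))
      ((fun _ : ℝ => (0 : ℝ)) τ) J τ := by
    intro τ hτ
    have h1 : HasDerivAt (fun τ => ξ τ ^ 8 * (1 - η τ ^ 2)) _ τ := ((hξ τ hτ).pow 8).mul (((hη τ hτ).pow 2).const_sub 1)
    have : HasDerivAt (fun τ => ξ τ ^ 8 * (1 - η τ ^ 2)) 0 τ := by
      convert h1 using 1; simp only [Pi.pow_apply]; push_cast; ring
    exact this.hasDerivWithinAt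
  have hconv : Convex ℝ J := by
    exact convex_iff_ordConnected.mpr hJ
  have := hconv.norm_image_sub_le_of_norm_hasDerivWithin_le hE
    (C := 0) (fun x _ => by simp) h₁ h₂
  have h0 : |ξ τ₂ ^ 8 * (1 - η τ₂ ^ 2) - ξ τ₁ ^ 8 * (1 - η τ₁ ^ 2)| ≤ 0 := by
    simpa using this
  have := abs_nonpos_iff.mp h0
  linarith [sub_eq_zero.mp this]
end

section
/- Let ξ, η : J → ℝ be continuously differentiable on an interval J and satisfy ξ'(τ) = 2·ξ(τ)³·η(τ) and η'(τ) = 8·ξ(τ)²·(1 − η(τ)²) for all τ ∈ J. Suppose for some τ₀ ∈ J that ξ(τ₀) ≠ 0 and −1 < η(τ₀) < 1. Then for every τ ∈ J one has ξ(τ) ≠ 0 and −1 < η(τ) < 1, and η is strictly increasing on J. -/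
open Set Filter Topology

/-- for the planar system `ξ' = 2ξ³η`, `η' = 8ξ²(1 - η²)`, if at
some point `ξ(τ₀) ≠ 0` and `η(τ₀) ∈ (-1,1)` (i.e. the first integral
`E = ξ⁸(1-η²)` is positive), then `ξ` never vanishes, `η` stays in `(-1,1)`,
and `η` is strictly increasing. -/
theorem planar_system_eta_strict_mono (J : Set ℝ) (hJ : J.OrdConnected)
    (ξ η : ℝ → ℝ)
    (hξ : ∀ τ ∈ J, HasDerivAt ξ (2 * ξ τ ^ 3 * η τ) τ)
    (hη : ∀ τ ∈ J, HasDerivAt η (8 * ξ τ ^ 2 * (1 - η τ ^ 2)) τ)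
    (τ₀ : ℝ) (hτ₀ : τ₀ ∈ J) (hξ0 : ξ τ₀ ≠ 0)
    (hη0 : -1 < η τ₀ ∧ η τ₀ < 1) :
    (∀ τ ∈ J, ξ τ ≠ 0 ∧ -1 < η τ ∧ η τ < 1) ∧ StrictMonoOn η J := by
  have hconv : Convex ℝ J := convex_iff_ordConnected.2 hJ
  set E : ℝ → ℝ := fun τ => ξ τ ^ 8 * (1 - η τ ^ 2) with hE
  have hE' : ∀ τ ∈ J, HasDerivAt E 0 τ := by
    intro τ hτ
    have h1 := ((hξ τ hτ).pow 8).mul (((hη τ hτ).pow 2).const_sub 1)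
    replace h1 : HasDerivAt E _ τ := h1
    simp only [Pi.pow_apply] at h1
    convert h1 using 1
    ring
  have hEconst : ∀ τ ∈ J, E τ = E τ₀ := by
    intro τ hτ
    have := Convex.norm_image_sub_le_of_norm_hasDerivWithin_le
      (C := 0) (f := E) (f' := fun _ => (0:ℝ)) (s := J)
      (fun x hx => (hE' x hx).hasDerivWithinAt)
      (fun x _ => by simp) hconv hτ₀ hτ
    simp only [zero_mul, norm_le_zero_iff, sub_eq_zero] at this
    exact this
  have hEpos : 0 < E τ₀ := by
    have h8 : 0 < ξ τ₀ ^ 8 := by positivity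
    have : 0 < 1 - η τ₀ ^ 2 := by nlinarith [hη0.1, hη0.2]
    positivity
  have key : ∀ τ ∈ J, ξ τ ≠ 0 ∧ -1 < η τ ∧ η τ < 1 := by
    intro τ hτ
    have hpos : 0 < ξ τ ^ 8 * (1 - η τ ^ 2) := by
      rw [show ξ τ ^ 8 * (1 - η τ ^ 2) = E τ from rfl, hEconst τ hτ]; exact hEpos
    have hξne : ξ τ ≠ 0 := by
      rintro h; rw [h] at hpos; simp at hpos
    have h1 : 0 < 1 - η τ ^ 2 := by
      by_contra h
      push_neg at h
      have h8 : (0:ℝ) ≤ ξ τ ^ 8 := by positivity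
      nlinarith [mul_nonneg h8 (by linarith : (0:ℝ) ≤ η τ ^ 2 - 1)]
    refine ⟨hξne, by nlinarith, by nlinarith⟩
  refine ⟨key, strictMonoOn_of_deriv_pos hconv (fun τ hτ => (hη τ hτ).continuousAt.continuousWithinAt) ?_⟩
  intro τ hτ
  have hτJ : τ ∈ J := interior_subset hτ
  rw [(hη τ hτJ).deriv]
  obtain ⟨hξne, h1, h2⟩ := key τ hτJ
  have hsq : 0 < ξ τ ^ 2 := by positivity
  have h3 : 0 < 1 - η τ ^ 2 := by nlinarith
  positivity
end
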